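/- Let X be a finite alphabet and P a type of denominator n (i.e., P ∈ P_n). Then the size of the type class T(P) = {x ∈ X^n : T_x = P} satisfies (n+1)^{−|X|}·exp(n·H(P)) ≤ |T(P)| ≤ exp(n·H(P)). -/

import Mathlib

open Finset Nat Equiv


private lemma fact_aux1 (m d : ℕ) : (m + d)! ≤ m ! * (m + d) ^ d := by
  induction d with
  | zero => simp
  | succ d ih =>
    rw [← Nat.add_assoc, Nat.factorial_succ, pow_succ]
    calc (m + d + 1) * (m + d)! ≤ (m + d + 1) * (m ! * (m + d) ^ d) :=
          Nat.mul_le_mul_left _ ih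
    _ ≤ (m + d + 1) * (m ! * (m + d + 1) ^ d) := by
          exact Nat.mul_le_mul_left _ (Nat.mul_le_mul_left _ (Nat.pow_le_pow_left (by omega) d))
    _ = m ! * ((m + d + 1) ^ d * (m + d + 1)) := by ring
  
private lemma fact_aux2 (c d : ℕ) : c ! * c ^ d ≤ (c + d)! := by
  induction d with
  | zero => simp
  | succ d ih =>
    calc c ! * c ^ (d + 1) = (c ! * c ^ d) * c := by ring
    _ ≤ (c + d)! * c := Nat.mul_le_mul_right _ ih
    _ ≤ (c + d)! * (c + d + 1) := Nat.mul_le_mul_left _ (by omega)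
    _ = (c + (d + 1))! := by rw [← Nat.add_assoc, Nat.factorial_succ]; ring

private lemma fact_key (c m : ℕ) : c ! * c ^ m ≤ m ! * c ^ c := by
  rcases le_total c m with h | h
  · obtain ⟨d, rfl⟩ := Nat.exists_eq_add_of_le h
    calc c ! * c ^ (c + d) = (c ! * c ^ d) * c ^ c := by rw [pow_add]; ring
    _ ≤ (c + d)! * c ^ c := Nat.mul_le_mul_right _ (fact_aux2 c d)
  · obtain ⟨d, rfl⟩ := Nat.exists_eq_add_of_le h
    calc (m + d)! * (m + d) ^ m ≤ (m ! * (m + d) ^ d) * (m + d) ^ m :=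
          Nat.mul_le_mul_right _ (fact_aux1 m d)
    _ = m ! * (m + d) ^ (m + d) := by rw [mul_assoc, ← pow_add, add_comm d m]


-- fiber of sigma fst
private def sigmaFstFiber {X : Type*} (β : X → Type*) (a : X) :
    {p : (Σ b, β b) // p.1 = a} ≃ β a where
  toFun p := cast (congrArg β p.2) p.1.2
  invFun j := ⟨⟨a, j⟩, rfl⟩
  left_inv := by rintro ⟨⟨b, j⟩, rfl⟩; rfl
  right_inv j := rfl

private lemma card_filter_comp_perm {X : Type*} [DecidableEq X] {n : ℕ}
    (y : Fin n → X) (σ : Equiv.Perm (Fin n)) (a : X) :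
    (Finset.univ.filter fun i => y (σ i) = a).card
      = (Finset.univ.filter fun i => y i = a).card := by
  rw [← Fintype.card_subtype, ← Fintype.card_subtype]
  exact Fintype.card_congr (Equiv.subtypeEquiv σ fun i => Iff.rfl)

private lemma card_typeclass {X : Type*} [Fintype X] [DecidableEq X] {n : ℕ} (m : X → ℕ)
    (hm : ∑ a, m a = n) :
    ((Finset.univ.filter fun x : Fin n → X =>
        ∀ a, (Finset.univ.filter fun i => x i = a).card = m a).card) * ∏ a, (m a)! = n ! := by
  classical
  -- a reference sequence with the right counts
  have hcard : Fintype.card (Σ a, Fin (m a)) = Fintype.card (Fin n) := by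
    simp [Fintype.card_sigma, hm]
  let e : (Σ a, Fin (m a)) ≃ Fin n := Fintype.equivOfCardEq hcard
  let x₀ : Fin n → X := fun i => (e.symm i).1
  have hx₀ : ∀ a, (Finset.univ.filter fun i => x₀ i = a).card = m a := by
    intro a
    rw [← Fintype.card_subtype]
    have e1 : {i : Fin n // x₀ i = a} ≃ {p : Σ b, Fin (m b) // p.1 = a} :=
      Equiv.subtypeEquiv e.symm fun i => Iff.rfl
    rw [Fintype.card_congr (e1.trans (sigmaFstFiber _ a)), Fintype.card_fin]
  set T := (Finset.univ.filter fun x : Fin n → X =>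
        ∀ a, (Finset.univ.filter fun i => x i = a).card = m a) with hT
  have hmaps : ∀ σ : Equiv.Perm (Fin n), σ ∈ Finset.univ → x₀ ∘ σ ∈ T := by
    intro σ _
    rw [hT, Finset.mem_filter]
    exact ⟨Finset.mem_univ _, fun a => by
      rw [show ((Finset.univ.filter fun i => (x₀ ∘ σ) i = a)) =
        (Finset.univ.filter fun i => x₀ (σ i) = a) from rfl,
        card_filter_comp_perm x₀ σ a]; exact hx₀ a⟩
  have hfib : ∀ x ∈ T, (Finset.univ.filter fun σ : Equiv.Perm (Fin n) => x₀ ∘ σ = x).card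
      = ∏ a, (m a)! := by
    intro x hx
    rw [hT, Finset.mem_filter] at hx
    -- build τ with x₀ ∘ τ = x
    have key : ∀ a, Fintype.card {i // x i = a} = Fintype.card {i // x₀ i = a} := by
      intro a
      rw [Fintype.card_subtype, Fintype.card_subtype, hx.2 a, hx₀ a]
    let f : ∀ a, {i // x i = a} ≃ {i // x₀ i = a} := fun a => Fintype.equivOfCardEq (key a)
    let τ : Equiv.Perm (Fin n) :=
      ((Equiv.sigmaFiberEquiv x).symm.trans (Equiv.sigmaCongrRight f)).trans
        (Equiv.sigmaFiberEquiv x₀)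
    have hτ : ∀ i, x₀ (τ i) = x i := fun i => ((f (x i)) ⟨i, rfl⟩).2
    have e2 : {σ : Equiv.Perm (Fin n) // x₀ ∘ σ = x} ≃
        {g : Equiv.Perm (Fin n) // x₀ ∘ g = x₀} := by
      refine Equiv.subtypeEquiv (Equiv.mulRight τ⁻¹) fun σ => ?_
      constructor
      · intro h
        funext j
        have h2 := hτ (τ⁻¹ j)
        rw [Equiv.Perm.inv_def, Equiv.apply_symm_apply] at h2
        exact (congrFun h (τ⁻¹ j)).trans h2.symm
      · intro h
        funext i
        have h1 : x₀ (σ (τ⁻¹ (τ i))) = x₀ (τ i) := congrFun h (τ i)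
        simpa [hτ i] using h1
    rw [← Fintype.card_subtype, Fintype.card_congr e2, DomMulAct.stabilizer_card]
    exact Finset.prod_congr rfl fun a _ => by rw [Fintype.card_subtype, hx₀ a]
  have := Finset.card_eq_sum_card_fiberwise hmaps
  rw [Finset.card_univ, Fintype.card_perm, Fintype.card_fin] at this
  rw [this, Finset.sum_congr rfl hfib, Finset.sum_const, smul_eq_mul]

private lemma max_term {X : Type*} [Fintype X] [DecidableEq X] {n : ℕ} (c m : X → ℕ) (hc : ∑ a, c a = n) (hm : ∑ a, m a = n) :
    ((Finset.univ.filter fun x : Fin n → X =>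
        ∀ a, (Finset.univ.filter fun i => x i = a).card = m a).card) * ∏ a, (c a) ^ (m a) ≤
    ((Finset.univ.filter fun x : Fin n → X =>
        ∀ a, (Finset.univ.filter fun i => x i = a).card = c a).card) * ∏ a, (c a) ^ (c a) := by
  classical
  have A := card_typeclass m hm
  have B := card_typeclass c hc
  set Nm := ((Finset.univ.filter fun x : Fin n → X =>
        ∀ a, (Finset.univ.filter fun i => x i = a).card = m a).card)
  set Nc := ((Finset.univ.filter fun x : Fin n → X =>
        ∀ a, (Finset.univ.filter fun i => x i = a).card = c a).card)
  have hkey : ∏ a, ((c a)! * (c a) ^ (m a)) ≤ ∏ a, ((m a)! * (c a) ^ (c a)) :=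
    Finset.prod_le_prod' fun a _ => fact_key (c a) (m a)
  have hpos : 0 < (∏ a, (m a)!) * ∏ a, (c a)! := by positivity
  apply Nat.le_of_mul_le_mul_right _ hpos
  calc (Nm * ∏ a, c a ^ m a) * ((∏ a, (m a)!) * ∏ a, (c a)!)
      = (Nm * ∏ a, (m a)!) * ∏ a, ((c a)! * c a ^ m a) := by
        rw [Finset.prod_mul_distrib]; ring
    _ = n ! * ∏ a, ((c a)! * c a ^ m a) := by rw [A]
    _ ≤ n ! * ∏ a, ((m a)! * c a ^ c a) := Nat.mul_le_mul_left _ hkey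
    _ = (Nc * ∏ a, (c a)!) * ∏ a, ((m a)! * c a ^ c a) := by rw [B]
    _ = (Nc * ∏ a, c a ^ c a) * ((∏ a, (m a)!) * ∏ a, (c a)!) := by
        rw [Finset.prod_mul_distrib]; ring

private lemma pow_bound {X : Type*} [Fintype X] [DecidableEq X] {n : ℕ} (c : X → ℕ) (hc : ∑ a, c a = n) :
    n ^ n ≤ (n + 1) ^ (Fintype.card X) *
      (((Finset.univ.filter fun x : Fin n → X =>
        ∀ a, (Finset.univ.filter fun i => x i = a).card = c a).card) * ∏ a, (c a) ^ (c a)) := by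
  classical
  set cnt : (Fin n → X) → (X → ℕ) := fun x a => (Finset.univ.filter fun i => x i = a).card
    with hcnt
  have hcnt_sum : ∀ x : Fin n → X, ∑ a, cnt x a = n := by
    intro x
    have := Finset.card_eq_sum_card_fiberwise (fun i (_ : i ∈ Finset.univ) =>
      Finset.mem_univ (x i))
    rw [Finset.card_univ, Fintype.card_fin] at this
    exact this.symm
  have h2 : ∀ x : Fin n → X, ∏ i, c (x i) = ∏ a, c a ^ cnt x a := by
    intro x
    rw [← Finset.prod_fiberwise_of_maps_to (fun i (_ : i ∈ Finset.univ) =>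
      Finset.mem_univ (x i)) (fun i => c (x i))]
    refine Finset.prod_congr rfl fun a _ => ?_
    rw [Finset.prod_congr rfl (fun i hi => by
      rw [Finset.mem_filter] at hi; rw [hi.2] : ∀ i ∈ Finset.univ.filter fun i => x i = a,
        c (x i) = c a), Finset.prod_const]
  have h1 : ∑ x : Fin n → X, ∏ i, c (x i) = n ^ n := by
    have := Finset.prod_univ_sum (fun _ : Fin n => (Finset.univ : Finset X)) (fun _ a => c a)
    rw [Fintype.piFinset_univ] at this
    rw [← this, hc, Finset.prod_const, Finset.card_univ, Fintype.card_fin]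
  set M : Finset (X → ℕ) := Finset.univ.image cnt with hM
  have h3 : ∑ x : Fin n → X, ∏ i, c (x i) =
      ∑ m ∈ M, (Finset.univ.filter fun x : Fin n → X => cnt x = m).card * ∏ a, c a ^ m a := by
    rw [← Finset.sum_fiberwise_of_maps_to (fun x (_ : x ∈ Finset.univ) =>
      Finset.mem_image_of_mem cnt (Finset.mem_univ x)) (fun x => ∏ i, c (x i))]
    refine Finset.sum_congr rfl fun m _ => ?_
    rw [Finset.sum_congr rfl (fun x hx => by
      rw [Finset.mem_filter] at hx
      rw [h2 x, hx.2] : ∀ x ∈ Finset.univ.filter fun x : Fin n → X => cnt x = m,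
        (∏ i, c (x i)) = ∏ a, c a ^ m a), Finset.sum_const, smul_eq_mul]
  have hfilter_eq : ∀ m : X → ℕ, (Finset.univ.filter fun x : Fin n → X => cnt x = m) =
      (Finset.univ.filter fun x : Fin n → X =>
        ∀ a, (Finset.univ.filter fun i => x i = a).card = m a) := by
    intro m
    refine Finset.filter_congr fun x _ => ?_
    rw [funext_iff]
  have h4 : ∀ m ∈ M, (Finset.univ.filter fun x : Fin n → X => cnt x = m).card *
      ∏ a, c a ^ m a ≤
      ((Finset.univ.filter fun x : Fin n → X =>
        ∀ a, (Finset.univ.filter fun i => x i = a).card = c a).card) * ∏ a, (c a) ^ (c a) := by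
    intro m hm
    rw [hfilter_eq m]
    obtain ⟨x, _, rfl⟩ := Finset.mem_image.mp hm
    exact max_term c (cnt x) hc (hcnt_sum x)
  have hMcard : M.card ≤ (n + 1) ^ (Fintype.card X) := by
    have hsub : M ⊆ Fintype.piFinset (fun _ : X => Finset.range (n + 1)) := by
      intro m hm
      obtain ⟨x, _, rfl⟩ := Finset.mem_image.mp hm
      rw [Fintype.mem_piFinset]
      intro a
      rw [Finset.mem_range]
      have : cnt x a ≤ n := by
        have := Finset.card_filter_le (Finset.univ : Finset (Fin n)) (fun i => x i = a)
        rwa [Finset.card_univ, Fintype.card_fin] at this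
      exact Nat.lt_succ_of_le this
    calc M.card ≤ (Fintype.piFinset (fun _ : X => Finset.range (n + 1))).card :=
          Finset.card_le_card hsub
      _ = (n + 1) ^ (Fintype.card X) := by
          rw [Fintype.card_piFinset]
          simp [Finset.card_range]
  calc n ^ n = ∑ x : Fin n → X, ∏ i, c (x i) := h1.symm
    _ = ∑ m ∈ M, (Finset.univ.filter fun x : Fin n → X => cnt x = m).card * ∏ a, c a ^ m a := h3
    _ ≤ ∑ _m ∈ M, ((Finset.univ.filter fun x : Fin n → X =>
        ∀ a, (Finset.univ.filter fun i => x i = a).card = c a).card) * ∏ a, (c a) ^ (c a) :=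
        Finset.sum_le_sum h4
    _ = M.card * (((Finset.univ.filter fun x : Fin n → X =>
        ∀ a, (Finset.univ.filter fun i => x i = a).card = c a).card) * ∏ a, (c a) ^ (c a)) := by
        rw [Finset.sum_const, smul_eq_mul]
    _ ≤ (n + 1) ^ (Fintype.card X) * (((Finset.univ.filter fun x : Fin n → X =>
        ∀ a, (Finset.univ.filter fun i => x i = a).card = c a).card) * ∏ a, (c a) ^ (c a)) :=
        Nat.mul_le_mul_right _ hMcard


/-- For a type `P` of denominator `n` (given by counts `c : X → ℕ` with
`∑ₐ c a = n` and `P a = c a / n`), the size of the type class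
`T(P) = {x ∈ X^n : T_x = P}` satisfies
`(n+1)^{−|X|}·exp(n·H(P)) ≤ |T(P)| ≤ exp(n·H(P))`. -/
theorem type_class_size_bounds
    {X : Type*} [Fintype X] [DecidableEq X] (n : ℕ) (hn : 0 < n)
    (c : X → ℕ) (hc : ∑ a, c a = n)
    (P : X → ℝ) (hP : ∀ a, P a = (c a : ℝ) / n)
    (Hent : ℝ) (hH : Hent = -∑ a, P a * Real.log (P a)) :
    ((n + 1 : ℝ) ^ Fintype.card X)⁻¹ * Real.exp (n * Hent) ≤
      ((Finset.univ.filter fun x : Fin n → X =>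
          ∀ a, (Finset.univ.filter fun i => x i = a).card = c a).card : ℝ) ∧
    ((Finset.univ.filter fun x : Fin n → X =>
        ∀ a, (Finset.univ.filter fun i => x i = a).card = c a).card : ℝ) ≤
      Real.exp (n * Hent) := by
  classical
  set T := (Finset.univ.filter fun x : Fin n → X =>
      ∀ a, (Finset.univ.filter fun i => x i = a).card = c a) with hT
  have hn' : (n : ℝ) ≠ 0 := Nat.cast_ne_zero.mpr hn.ne'
  have hPnonneg : ∀ a, 0 ≤ P a := fun a => by rw [hP a]; positivity
  -- entropy computation
  have hterm : ∀ a, Real.exp ((c a : ℝ) * Real.log (P a)) = P a ^ (c a) := by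
    intro a
    rcases Nat.eq_zero_or_pos (c a) with h | h
    · simp [h]
    · have hPa : 0 < P a := by
        rw [hP a]
        apply _root_.div_pos (by exact_mod_cast h)
        exact_mod_cast hn
      rw [Real.exp_nat_mul, Real.exp_log hPa]
  have hsum : (n : ℝ) * Hent = -∑ a, (c a : ℝ) * Real.log (P a) := by
    rw [hH, mul_neg, neg_inj, Finset.mul_sum]
    refine Finset.sum_congr rfl fun a _ => ?_
    rw [hP a]
    field_simp
  have hprod : ∏ a, P a ^ (c a) = Real.exp (-((n : ℝ) * Hent)) := by
    rw [hsum, neg_neg, Real.exp_sum]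
    exact Finset.prod_congr rfl fun a _ => (hterm a).symm
  have hexp_pos := Real.exp_pos ((n : ℝ) * Hent)
  have hEinv : Real.exp (-((n : ℝ) * Hent)) = (Real.exp ((n : ℝ) * Hent))⁻¹ := Real.exp_neg _
  -- upper bound: T.card * ∏ P^c ≤ 1
  have hTsub : (T.card : ℝ) * ∏ a, P a ^ c a ≤ 1 := by
    have htot : ∑ x : Fin n → X, ∏ i, P (x i) = 1 := by
      have := Finset.prod_univ_sum (fun _ : Fin n => (Finset.univ : Finset X)) (fun _ a => P a)
      rw [Fintype.piFinset_univ] at this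
      rw [← this]
      have hsumP : ∑ a, P a = 1 := by
        rw [Finset.sum_congr rfl fun a _ => hP a, ← Finset.sum_div]
        rw [show ∑ a, ((c a : ℝ)) = (n : ℝ) by exact_mod_cast congrArg Nat.cast hc]
        field_simp
      rw [Finset.prod_congr rfl fun _ _ => hsumP, Finset.prod_const, one_pow]
    have heach : ∀ x ∈ T, ∏ i, P (x i) = ∏ a, P a ^ c a := by
      intro x hx
      rw [hT, Finset.mem_filter] at hx
      rw [← Finset.prod_fiberwise_of_maps_to (fun i (_ : i ∈ Finset.univ) =>
        Finset.mem_univ (x i)) (fun i => P (x i))]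
      refine Finset.prod_congr rfl fun a _ => ?_
      rw [Finset.prod_congr rfl (fun i hi => by
        rw [Finset.mem_filter] at hi; rw [hi.2] : ∀ i ∈ Finset.univ.filter fun i => x i = a,
          P (x i) = P a), Finset.prod_const, hx.2 a]
    calc (T.card : ℝ) * ∏ a, P a ^ c a = ∑ x ∈ T, ∏ i, P (x i) := by
          rw [Finset.sum_congr rfl heach, Finset.sum_const, nsmul_eq_mul]
      _ ≤ ∑ x : Fin n → X, ∏ i, P (x i) := by
          apply Finset.sum_le_sum_of_subset_of_nonneg (Finset.subset_univ T)
          intro x _ _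
          exact Finset.prod_nonneg fun i _ => hPnonneg (x i)
      _ = 1 := htot
  rw [hprod, hEinv] at hTsub
  constructor
  · -- lower bound
    have hD := pow_bound c hc
    have hDr : ((n : ℝ)) ^ n ≤ (n + 1 : ℝ) ^ (Fintype.card X) *
        ((T.card : ℝ) * ∏ a, ((c a : ℝ)) ^ (c a)) := by exact_mod_cast hD
    have hprod2 : (∏ a, ((c a : ℝ)) ^ (c a)) =
        (Real.exp ((n : ℝ) * Hent))⁻¹ * (n : ℝ) ^ n := by
      have hca : ∀ a, (c a : ℝ) = P a * n := fun a => by rw [hP a]; field_simp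
      calc ∏ a, ((c a : ℝ)) ^ (c a) = ∏ a, (P a ^ c a * (n : ℝ) ^ c a) := by
            exact Finset.prod_congr rfl fun a _ => by rw [hca a, mul_pow]
        _ = (∏ a, P a ^ c a) * ∏ a, ((n : ℝ)) ^ c a := Finset.prod_mul_distrib
        _ = (Real.exp ((n : ℝ) * Hent))⁻¹ * (n : ℝ) ^ n := by
            rw [hprod, hEinv, Finset.prod_pow_eq_pow_sum, hc]
    rw [hprod2] at hDr
    have hnn : (0 : ℝ) < (n : ℝ) ^ n := by positivity
    have hA : (0 : ℝ) < (n + 1 : ℝ) ^ (Fintype.card X) := by positivity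
    have h1 : 1 ≤ (n + 1 : ℝ) ^ (Fintype.card X) * ((T.card : ℝ) *
        (Real.exp ((n : ℝ) * Hent))⁻¹) := by
      have h2 : (1 : ℝ) * ((n : ℝ) ^ n) ≤ ((n + 1 : ℝ) ^ (Fintype.card X) * ((T.card : ℝ) *
          (Real.exp ((n : ℝ) * Hent))⁻¹)) * ((n : ℝ) ^ n) := by
        rw [one_mul]
        calc ((n : ℝ)) ^ n ≤ (n + 1 : ℝ) ^ (Fintype.card X) *
              ((T.card : ℝ) * ((Real.exp ((n : ℝ) * Hent))⁻¹ * (n : ℝ) ^ n)) := hDr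
          _ = ((n + 1 : ℝ) ^ (Fintype.card X) * ((T.card : ℝ) *
              (Real.exp ((n : ℝ) * Hent))⁻¹)) * ((n : ℝ) ^ n) := by ring
      exact le_of_mul_le_mul_right h2 hnn
    rw [inv_mul_le_iff₀ hA]
    have h3 := mul_le_mul_of_nonneg_right h1 hexp_pos.le
    rw [one_mul] at h3
    calc Real.exp ((n : ℝ) * Hent) ≤ (n + 1 : ℝ) ^ (Fintype.card X) * ((T.card : ℝ) *
          (Real.exp ((n : ℝ) * Hent))⁻¹) * Real.exp ((n : ℝ) * Hent) := h3
      _ = (n + 1 : ℝ) ^ (Fintype.card X) * (T.card : ℝ) *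
          ((Real.exp ((n : ℝ) * Hent))⁻¹ * Real.exp ((n : ℝ) * Hent)) := by ring
      _ = (n + 1 : ℝ) ^ (Fintype.card X) * (T.card : ℝ) := by
          rw [inv_mul_cancel₀ hexp_pos.ne', mul_one]
  · -- upper bound
    have h3 := mul_le_mul_of_nonneg_right hTsub hexp_pos.le
    rw [one_mul] at h3
    calc (T.card : ℝ) = (T.card : ℝ) * ((Real.exp ((n : ℝ) * Hent))⁻¹ *
          Real.exp ((n : ℝ) * Hent)) := by rw [inv_mul_cancel₀ hexp_pos.ne', mul_one]
      _ = (T.card : ℝ) * (Real.exp ((n : ℝ) * Hent))⁻¹ * Real.exp ((n : ℝ) * Hent) := by ring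
      _ ≤ Real.exp ((n : ℝ) * Hent) := h3
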